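/- Let G and H be nontrivial connected finite graphs and ℓ ≥ 1. If T is an ℓ-solid-resolving set of G and U is an ℓ-solid-resolving set of H, then T × U is an ℓ-solid-resolving set of G □ H. Consequently, max{β_ℓ^s(G), β_ℓ^s(H)} ≤ β_ℓ^s(G □ H) ≤ β_ℓ^s(G)·β_ℓ^s(H). -/

import Mathlib

open SimpleGraph

variable {V : Type*}

/-- Distance from a vertex to a set of vertices. -/
noncomputable def dSet (G : SimpleGraph V) (s : V) (X : Set V) : ℕ :=
  sInf ((G.dist s) '' X)

/-- `S` is an `ℓ`-solid-resolving set of `G`. -/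
def LSolid (G : SimpleGraph V) (S : Set V) (ℓ : ℕ) : Prop :=
  ∀ X Y : Set V, X.Nonempty → Y.Nonempty → X.ncard ≤ ℓ → X ≠ Y →
    ∃ s ∈ S, dSet G s X ≠ dSet G s Y

/-- `S` is an `{ℓ}`-resolving set of `G`. -/
def LResolving (G : SimpleGraph V) (S : Set V) (ℓ : ℕ) : Prop :=
  ∀ X Y : Set V, X.Nonempty → Y.Nonempty → X.ncard ≤ ℓ → Y.ncard ≤ ℓ → X ≠ Y →
    ∃ s ∈ S, dSet G s X ≠ dSet G s Y

/-- The `ℓ`-solid-metric dimension of `G`. -/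
noncomputable def solidDim (G : SimpleGraph V) (ℓ : ℕ) : ℕ :=
  sInf {k | ∃ S : Set V, LSolid G S ℓ ∧ S.ncard = k}

/-- The `{ℓ}`-metric dimension of `G`. -/
noncomputable def lDim (G : SimpleGraph V) (ℓ : ℕ) : ℕ :=
  sInf {k | ∃ S : Set V, LResolving G S ℓ ∧ S.ncard = k}

section Aux

variable {W : Type*}

private lemma dSet_le {G : SimpleGraph V} {s x : V} {X : Set V} (hx : x ∈ X) :
    dSet G s X ≤ G.dist s x :=
  Nat.sInf_le ⟨x, hx, rfl⟩

private lemma exists_dSet {G : SimpleGraph V} (s : V) {X : Set V} (hX : X.Nonempty) :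
    ∃ x ∈ X, dSet G s X = G.dist s x := by
  obtain ⟨x, hx, hval⟩ := Nat.sInf_mem (hX.image (G.dist s))
  exact ⟨x, hx, hval.symm⟩

/-- From `LSolid` to the pointwise "solid" characterization. -/
private lemma solidPt {G : SimpleGraph V} {S : Set V} {ℓ : ℕ} (hS : LSolid G S ℓ)
    (x : V) (Y : Set V) (hYne : Y.Nonempty) (hYc : Y.ncard ≤ ℓ) (hx : x ∉ Y) :
    ∃ s ∈ S, ∀ y ∈ Y, G.dist s x < G.dist s y := by
  have hne : Y ≠ insert x Y := fun h => hx (by rw [h]; exact Set.mem_insert x Y)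
  obtain ⟨s, hs, hd⟩ := hS Y (insert x Y) hYne (Set.insert_nonempty x Y) hYc hne
  refine ⟨s, hs, fun y hy => ?_⟩
  have h1 : dSet G s (insert x Y) ≤ G.dist s x := dSet_le (Set.mem_insert x Y)
  obtain ⟨y0, hy0, hval0⟩ := exists_dSet s hYne (G := G)
  have h2 : dSet G s (insert x Y) ≤ dSet G s Y := by
    rw [hval0]; exact dSet_le (Set.mem_insert_of_mem x hy0)
  obtain ⟨z, hz, hvz⟩ := exists_dSet s (Set.insert_nonempty x Y) (G := G)
  have h4 : dSet G s Y ≤ G.dist s y := dSet_le hy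
  rcases Set.mem_insert_iff.mp hz with rfl | hzY
  · omega
  · have h5 : dSet G s Y ≤ G.dist s z := dSet_le hzY
    omega

/-- From the pointwise "solid" characterization to `LSolid`. -/
private lemma lSolid_of_solidPt [Fintype V] {G : SimpleGraph V} {S : Set V} {ℓ : ℕ}
    (h : ∀ (x : V) (Y : Set V), Y.Nonempty → Y.ncard ≤ ℓ → x ∉ Y →
      ∃ s ∈ S, ∀ y ∈ Y, G.dist s x < G.dist s y) : LSolid G S ℓ := by
  intro X Y hX hY hXc hne
  by_cases hsub : Y ⊆ X
  · obtain ⟨x, hxX, hxY⟩ := Set.exists_of_ssubset (hsub.ssubset_of_ne (Ne.symm hne))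
    have hYc : Y.ncard ≤ ℓ := le_trans (Set.ncard_le_ncard hsub (Set.toFinite X)) hXc
    obtain ⟨s, hs, hlt⟩ := h x Y hY hYc hxY
    refine ⟨s, hs, ?_⟩
    obtain ⟨y0, hy0, hval⟩ := exists_dSet s hY (G := G)
    have h1 : dSet G s X ≤ G.dist s x := dSet_le hxX
    have h2 : G.dist s x < G.dist s y0 := hlt y0 hy0
    omega
  · obtain ⟨y, hyY, hyX⟩ := Set.not_subset.mp hsub
    obtain ⟨s, hs, hlt⟩ := h y X hX hXc hyX
    refine ⟨s, hs, ?_⟩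
    obtain ⟨x0, hx0, hval⟩ := exists_dSet s hX (G := G)
    have h1 : dSet G s Y ≤ G.dist s y := dSet_le hyY
    have h2 : G.dist s y < G.dist s x0 := hlt x0 hx0
    omega

private lemma lSolid_nonempty [Nontrivial V] {G : SimpleGraph V} {S : Set V} {ℓ : ℕ}
    (hℓ : 1 ≤ ℓ) (hS : LSolid G S ℓ) : S.Nonempty := by
  obtain ⟨a, b, hab⟩ := exists_pair_ne V
  obtain ⟨s, hs, -⟩ := hS {a} {b} (Set.singleton_nonempty a) (Set.singleton_nonempty b)
    (by simpa [Set.ncard_singleton] using hℓ)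
    (by simpa [Set.singleton_eq_singleton_iff] using hab)
  exact ⟨s, hs⟩

private lemma lSolid_univ {G : SimpleGraph V} (hG : G.Connected) (ℓ : ℕ) :
    LSolid G Set.univ ℓ := by
  intro X Y hX hY _ hne
  have key : ∀ {A B : Set V}, (∃ a ∈ A, a ∉ B) → B.Nonempty →
      ∃ s, dSet G s A ≠ dSet G s B := by
    rintro A B ⟨a, haA, haB⟩ hB
    refine ⟨a, ?_⟩
    have h1 : dSet G a A = 0 :=
      Nat.le_zero.mp (by simpa [SimpleGraph.dist_self] using dSet_le haA (s := a))
    obtain ⟨b, hb, hval⟩ := exists_dSet a hB (G := G)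
    have h2 : G.dist a b ≠ 0 := fun h => haB (by rwa [hG.dist_eq_zero_iff.mp h])
    omega
  have hdis : (∃ a ∈ X, a ∉ Y) ∨ ∃ b ∈ Y, b ∉ X := by
    by_contra hc
    push_neg at hc
    exact hne (Set.Subset.antisymm (fun a ha => hc.1 a ha) (fun b hb => hc.2 b hb))
  rcases hdis with h | h
  · obtain ⟨s, hs⟩ := key h hY
    exact ⟨s, Set.mem_univ s, hs⟩
  · obtain ⟨s, hs⟩ := key h hX
    exact ⟨s, Set.mem_univ s, hs.symm⟩

/-- Any walk in the box product is at least as long as the sum of coordinate distances. -/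
private lemma walk_dist_le {G : SimpleGraph V} {H : SimpleGraph W}
    (hG : G.Connected) (hH : H.Connected) {x y : V × W} (w : (G □ H).Walk x y) :
    G.dist x.1 y.1 + H.dist x.2 y.2 ≤ w.length := by
  induction w with
  | nil => simp [SimpleGraph.dist_self]
  | @cons a b c h p ih =>
    rw [SimpleGraph.Walk.length_cons]
    rcases boxProd_adj.mp h with ⟨hA, he⟩ | ⟨hA, he⟩
    · have h1 : G.dist a.1 b.1 = 1 := SimpleGraph.dist_eq_one_iff_adj.mpr hA
      have h2 : G.dist a.1 c.1 ≤ G.dist a.1 b.1 + G.dist b.1 c.1 :=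
        hG.dist_triangle (v := b.1)
      rw [he]
      omega
    · have h1 : H.dist a.2 b.2 = 1 := SimpleGraph.dist_eq_one_iff_adj.mpr hA
      have h2 : H.dist a.2 c.2 ≤ H.dist a.2 b.2 + H.dist b.2 c.2 :=
        hH.dist_triangle (v := b.2)
      rw [he]
      omega

/-- Distance in the box product is the sum of coordinate distances. -/
private lemma boxProd_dist {G : SimpleGraph V} {H : SimpleGraph W}
    (hG : G.Connected) (hH : H.Connected) (x y : V × W) :
    (G □ H).dist x y = G.dist x.1 y.1 + H.dist x.2 y.2 := by
  refine le_antisymm ?_ ?_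
  · obtain ⟨w1, h1⟩ := hG.exists_walk_length_eq_dist x.1 y.1
    obtain ⟨w2, h2⟩ := hH.exists_walk_length_eq_dist x.2 y.2
    have hle := SimpleGraph.dist_le
      ((w1.boxProdLeft (H := H) x.2).append (SimpleGraph.Walk.boxProdRight G y.1 w2))
    have hlen : ((w1.boxProdLeft (H := H) x.2).append
        (SimpleGraph.Walk.boxProdRight G y.1 w2)).length = w1.length + w2.length := by
      rw [SimpleGraph.Walk.length_append]
      exact congrArg₂ (· + ·) (SimpleGraph.Walk.length_map _ _) (SimpleGraph.Walk.length_map _ _)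
    rw [hlen] at hle
    simp only [SimpleGraph.Walk.length_append, SimpleGraph.Walk.boxProdLeft,
      SimpleGraph.Walk.boxProdRight, SimpleGraph.Walk.length_map, Prod.mk.eta] at hle
    omega
  · obtain ⟨w, hw⟩ := ((hG.boxProd hH).exists_walk_length_eq_dist x y)
    rw [← hw]
    exact walk_dist_le hG hH w

/-- Part 1: the product of solid-resolving sets is solid-resolving in the box product. -/
private lemma part1 [Fintype V] [Fintype W] [Nontrivial V] [Nontrivial W]
    {G : SimpleGraph V} {H : SimpleGraph W} (hG : G.Connected) (hH : H.Connected)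
    {ℓ : ℕ} (hℓ : 1 ≤ ℓ) (T : Set V) (U : Set W) (hT : LSolid G T ℓ) (hU : LSolid H U ℓ) :
    LSolid (G □ H) (T ×ˢ U) ℓ := by
  apply lSolid_of_solidPt
  intro x Y hYne hYc hxY
  set A : Set V := (Prod.fst '' Y) \ {x.1} with hA
  set B : Set W := (Prod.snd '' Y) \ {x.2} with hB
  have hAc : A.ncard ≤ ℓ :=
    le_trans (le_trans (Set.ncard_le_ncard Set.diff_subset (Set.toFinite _))
      (Set.ncard_image_le (Set.toFinite Y))) hYc
  have hBc : B.ncard ≤ ℓ :=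
    le_trans (le_trans (Set.ncard_le_ncard Set.diff_subset (Set.toFinite _))
      (Set.ncard_image_le (Set.toFinite Y))) hYc
  obtain ⟨t, htT, ht⟩ : ∃ t ∈ T, ∀ c ∈ A, G.dist t x.1 < G.dist t c := by
    rcases A.eq_empty_or_nonempty with h | h
    · obtain ⟨t, htT⟩ := lSolid_nonempty hℓ hT
      exact ⟨t, htT, by simp [h]⟩
    · exact solidPt hT x.1 A h hAc (fun hc => hc.2 rfl)
  obtain ⟨u, huU, hu⟩ : ∃ u ∈ U, ∀ d ∈ B, H.dist u x.2 < H.dist u d := by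
    rcases B.eq_empty_or_nonempty with h | h
    · obtain ⟨u, huU⟩ := lSolid_nonempty hℓ hU
      exact ⟨u, huU, by simp [h]⟩
    · exact solidPt hU x.2 B h hBc (fun hc => hc.2 rfl)
  refine ⟨(t, u), Set.mk_mem_prod htT huU, fun y hy => ?_⟩
  rw [boxProd_dist hG hH, boxProd_dist hG hH]
  dsimp only
  have hxy : y ≠ x := fun h => hxY (h ▸ hy)
  by_cases h1 : y.1 = x.1
  · have h2 : y.2 ≠ x.2 := fun h => hxy (Prod.ext h1 h)
    have l2 : H.dist u x.2 < H.dist u y.2 := hu y.2 ⟨⟨y, hy, rfl⟩, h2⟩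
    rw [h1]
    omega
  · have l1 : G.dist t x.1 < G.dist t y.1 := ht y.1 ⟨⟨y, hy, rfl⟩, h1⟩
    by_cases h2 : y.2 = x.2
    · rw [h2]
      omega
    · have l2 : H.dist u x.2 < H.dist u y.2 := hu y.2 ⟨⟨y, hy, rfl⟩, h2⟩
      omega

private lemma prod_singleton_image (X : Set V) (w : W) :
    X ×ˢ ({w} : Set W) = (fun v => (v, w)) '' X := by
  ext p
  simp only [Set.mem_prod, Set.mem_singleton_iff, Set.mem_image]
  constructor
  · rintro ⟨h1, h2⟩
    exact ⟨p.1, h1, by rw [← h2]⟩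
  · rintro ⟨v, hv, rfl⟩
    exact ⟨hv, rfl⟩

private lemma singleton_prod_image (v : V) (X : Set W) :
    ({v} : Set V) ×ˢ X = (fun w => (v, w)) '' X := by
  ext p
  simp only [Set.mem_prod, Set.mem_singleton_iff, Set.mem_image]
  constructor
  · rintro ⟨h1, h2⟩
    exact ⟨p.2, h2, by rw [← h1]⟩
  · rintro ⟨w, hw, rfl⟩
    exact ⟨rfl, hw⟩

private lemma ncard_prod (s : Set V) (t : Set W) :
    (s ×ˢ t).ncard = s.ncard * t.ncard := by
  rw [← Nat.card_coe_set_eq, ← Nat.card_coe_set_eq, ← Nat.card_coe_set_eq,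
    Nat.card_congr (Equiv.Set.prod s t), Nat.card_prod]

private lemma dSet_prod_left {G : SimpleGraph V} {H : SimpleGraph W}
    (hG : G.Connected) (hH : H.Connected) (s : V × W) {X : Set V} (hX : X.Nonempty) (w : W) :
    dSet (G □ H) s (X ×ˢ ({w} : Set W)) = dSet G s.1 X + H.dist s.2 w := by
  obtain ⟨x0, hx0, hval⟩ := exists_dSet s.1 hX (G := G)
  refine le_antisymm ?_ ?_
  · have h1 : dSet (G □ H) s (X ×ˢ ({w} : Set W)) ≤ (G □ H).dist s (x0, w) :=
      dSet_le (Set.mk_mem_prod hx0 rfl)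
    rw [boxProd_dist hG hH] at h1
    dsimp only at h1
    omega
  · obtain ⟨y, hy, hval2⟩ := exists_dSet s (hX.prod (Set.singleton_nonempty w))
    have hy2 : y.2 = w := hy.2
    have h2 : dSet G s.1 X ≤ G.dist s.1 y.1 := dSet_le hy.1
    rw [hval2, boxProd_dist hG hH, hy2]
    omega

private lemma dSet_prod_right {G : SimpleGraph V} {H : SimpleGraph W}
    (hG : G.Connected) (hH : H.Connected) (s : V × W) (v : V) {X : Set W} (hX : X.Nonempty) :
    dSet (G □ H) s (({v} : Set V) ×ˢ X) = G.dist s.1 v + dSet H s.2 X := by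
  obtain ⟨x0, hx0, hval⟩ := exists_dSet s.2 hX (G := H)
  refine le_antisymm ?_ ?_
  · have h1 : dSet (G □ H) s (({v} : Set V) ×ˢ X) ≤ (G □ H).dist s (v, x0) :=
      dSet_le (Set.mk_mem_prod rfl hx0)
    rw [boxProd_dist hG hH] at h1
    dsimp only at h1
    omega
  · obtain ⟨y, hy, hval2⟩ := exists_dSet s ((Set.singleton_nonempty v).prod hX)
    have hy1 : y.1 = v := hy.1
    have h2 : dSet H s.2 X ≤ H.dist s.2 y.2 := dSet_le hy.2
    rw [hval2, boxProd_dist hG hH, hy1]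
    omega

private lemma lSolid_proj_fst [Fintype V] [Fintype W] {G : SimpleGraph V} {H : SimpleGraph W}
    (hG : G.Connected) (hH : H.Connected) {ℓ : ℕ} {S : Set (V × W)}
    (hS : LSolid (G □ H) S ℓ) (w0 : W) : LSolid G (Prod.fst '' S) ℓ := by
  intro X Y hX hY hXc hne
  have hinj : Function.Injective (fun v : V => (v, w0)) :=
    fun a b h => congrArg Prod.fst h
  have hXc' : (X ×ˢ ({w0} : Set W)).ncard ≤ ℓ := by
    rw [prod_singleton_image, Set.ncard_image_of_injective _ hinj]
    exact hXc
  have hne' : X ×ˢ ({w0} : Set W) ≠ Y ×ˢ ({w0} : Set W) := by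
    rw [prod_singleton_image, prod_singleton_image]
    intro h
    exact hne (Set.image_injective.mpr hinj h)
  obtain ⟨s, hsS, hval⟩ := hS _ _ (hX.prod (Set.singleton_nonempty w0))
    (hY.prod (Set.singleton_nonempty w0)) hXc' hne'
  refine ⟨s.1, ⟨s, hsS, rfl⟩, ?_⟩
  rw [dSet_prod_left hG hH s hX w0, dSet_prod_left hG hH s hY w0] at hval
  omega

private lemma lSolid_proj_snd [Fintype V] [Fintype W] {G : SimpleGraph V} {H : SimpleGraph W}
    (hG : G.Connected) (hH : H.Connected) {ℓ : ℕ} {S : Set (V × W)}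
    (hS : LSolid (G □ H) S ℓ) (v0 : V) : LSolid H (Prod.snd '' S) ℓ := by
  intro X Y hX hY hXc hne
  have hinj : Function.Injective (fun w : W => (v0, w)) :=
    fun a b h => congrArg Prod.snd h
  have hXc' : (({v0} : Set V) ×ˢ X).ncard ≤ ℓ := by
    rw [singleton_prod_image, Set.ncard_image_of_injective _ hinj]
    exact hXc
  have hne' : ({v0} : Set V) ×ˢ X ≠ ({v0} : Set V) ×ˢ Y := by
    rw [singleton_prod_image, singleton_prod_image]
    intro h
    exact hne (Set.image_injective.mpr hinj h)
  obtain ⟨s, hsS, hval⟩ := hS _ _ ((Set.singleton_nonempty v0).prod hX)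
    ((Set.singleton_nonempty v0).prod hY) hXc' hne'
  refine ⟨s.2, ⟨s, hsS, rfl⟩, ?_⟩
  rw [dSet_prod_right hG hH s v0 hX, dSet_prod_right hG hH s v0 hY] at hval
  omega

end Aux

theorem stmt_11 {W : Type*} [Fintype V] [Fintype W] [Nontrivial V] [Nontrivial W]
    (G : SimpleGraph V) (H : SimpleGraph W) (hG : G.Connected) (hH : H.Connected)
    (ℓ : ℕ) (hℓ : 1 ≤ ℓ) :
    (∀ T : Set V, ∀ U : Set W, LSolid G T ℓ → LSolid H U ℓ →
        LSolid (G.boxProd H) (T ×ˢ U) ℓ) ∧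
      max (solidDim G ℓ) (solidDim H ℓ) ≤ solidDim (G.boxProd H) ℓ ∧
      solidDim (G.boxProd H) ℓ ≤ solidDim G ℓ * solidDim H ℓ := by
  have hGH : (G □ H).Connected := hG.boxProd hH
  have part1' : ∀ T : Set V, ∀ U : Set W, LSolid G T ℓ → LSolid H U ℓ →
      LSolid (G.boxProd H) (T ×ˢ U) ℓ := fun T U hT hU => part1 hG hH hℓ T U hT hU
  have hneGH : {k | ∃ S : Set (V × W), LSolid (G □ H) S ℓ ∧ S.ncard = k}.Nonempty :=
    ⟨_, Set.univ, lSolid_univ hGH ℓ, rfl⟩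
  have hneG : {k | ∃ S : Set V, LSolid G S ℓ ∧ S.ncard = k}.Nonempty :=
    ⟨_, Set.univ, lSolid_univ hG ℓ, rfl⟩
  have hneH : {k | ∃ S : Set W, LSolid H S ℓ ∧ S.ncard = k}.Nonempty :=
    ⟨_, Set.univ, lSolid_univ hH ℓ, rfl⟩
  obtain ⟨v0, v1, -⟩ := exists_pair_ne V
  obtain ⟨w0, w1, -⟩ := exists_pair_ne W
  refine ⟨part1', ?_, ?_⟩
  · obtain ⟨S, hS, hScard⟩ := Nat.sInf_mem hneGH
    refine max_le ?_ ?_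
    · calc solidDim G ℓ ≤ (Prod.fst '' S).ncard :=
            Nat.sInf_le ⟨Prod.fst '' S, lSolid_proj_fst hG hH hS w0, rfl⟩
        _ ≤ S.ncard := Set.ncard_image_le (Set.toFinite S)
        _ = solidDim (G.boxProd H) ℓ := hScard
    · calc solidDim H ℓ ≤ (Prod.snd '' S).ncard :=
            Nat.sInf_le ⟨Prod.snd '' S, lSolid_proj_snd hG hH hS v0, rfl⟩
        _ ≤ S.ncard := Set.ncard_image_le (Set.toFinite S)
        _ = solidDim (G.boxProd H) ℓ := hScard
  · obtain ⟨T, hT, hTcard⟩ := Nat.sInf_mem hneG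
    obtain ⟨U, hU, hUcard⟩ := Nat.sInf_mem hneH
    calc solidDim (G.boxProd H) ℓ ≤ (T ×ˢ U).ncard :=
          Nat.sInf_le ⟨T ×ˢ U, part1' T U hT hU, rfl⟩
      _ = solidDim G ℓ * solidDim H ℓ := by rw [ncard_prod, hTcard, hUcard]; rfl
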